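/- Let k ≥ 2, J > 2, and take all signs s_i = +1. Then the set of real numbers c such that W(c, c, …, c) = 0, where W is the cyclic-interaction vector field, has exactly three elements, all lying in the open interval (0,1): c = 1/2 and two further values 1/2 ± y* with 0 < y* < 1/2. -/

import Mathlib

/-- The cyclic-interaction vector field `W : ℝ^k → ℝ^k`. -/
noncomputable def cycW (k : ℕ) (J : ℝ) (s : ZMod k → ℝ) (x : ZMod k → ℝ) :
    ZMod k → ℝ :=
  fun i =>
    Real.exp (s i * J * (x (i + 1) - 1 / 2)) -
      x i * (Real.exp (s i * J * (x (i + 1) - 1 / 2)) +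
        Real.exp (-(s i * J * (x (i + 1) - 1 / 2))))

lemma hasDerivAt_phi (J y : ℝ) (h1 : -(1/2) < y) (h2 : y < 1/2) :
    HasDerivAt (fun y => 2*J*y + Real.log (1-2*y) - Real.log (1+2*y))
      (2*J - 2/(1-2*y) - 2/(1+2*y)) y := by
  have hA : (0:ℝ) < 1-2*y := by linarith
  have hB : (0:ℝ) < 1+2*y := by linarith
  have d1 : HasDerivAt (fun y : ℝ => 1-2*y) (-2) y := by
    simpa using ((hasDerivAt_id y).const_mul (2:ℝ)).const_sub 1
  have d1' : HasDerivAt (fun y : ℝ => 1+2*y) 2 y := by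
    simpa using ((hasDerivAt_id y).const_mul (2:ℝ)).const_add 1
  have d2 := (Real.hasDerivAt_log hA.ne').comp y d1
  have d3 := (Real.hasDerivAt_log hB.ne').comp y d1'
  have d0 : HasDerivAt (fun y : ℝ => 2*J*y) (2*J) y := by
    simpa using (hasDerivAt_id y).const_mul (2*J)
  have := (d0.add d2).sub d3
  convert this using 1
  all_goals try rfl
  rw [div_eq_mul_inv, div_eq_mul_inv]
  ring

lemma phi_zeros (J : ℝ) (hJ : 2 < J) :
    ∃ ys : ℝ, 0 < ys ∧ ys < 1/2 ∧ ∀ y : ℝ, -(1/2) < y → y < 1/2 →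
      ((2*J*y + Real.log (1-2*y) - Real.log (1+2*y) = 0) ↔ (y = -ys ∨ y = 0 ∨ y = ys)) := by
  set φ : ℝ → ℝ := fun y => 2*J*y + Real.log (1-2*y) - Real.log (1+2*y) with hφ
  have hJ0 : (0:ℝ) < J := by linarith
  set r : ℝ := Real.sqrt ((J-2)/(4*J)) with hr
  have hq : (0:ℝ) < (J-2)/(4*J) := div_pos (by linarith) (by linarith)
  have hr2 : r^2 = (J-2)/(4*J) := Real.sq_sqrt hq.le
  have hrpos : 0 < r := Real.sqrt_pos.mpr hq
  have hq4 : (J-2)/(4*J) < 1/4 := by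
    rw [div_lt_div_iff₀ (by linarith) (by norm_num)]; linarith
  have hrhalf : r < 1/2 := by nlinarith [hr2, hrpos]
  -- derivative sign facts
  have hderiv : ∀ y : ℝ, -(1/2) < y → y < 1/2 →
      deriv φ y = 2*J - 2/(1-2*y) - 2/(1+2*y) := fun y a b =>
    (hasDerivAt_phi J y a b).deriv
  have hcont : ∀ y : ℝ, -(1/2) < y → y < 1/2 → ContinuousAt φ y := fun y a b =>
    (hasDerivAt_phi J y a b).continuousAt
  -- strict mono on [0, r]
  have hmono : StrictMonoOn φ (Set.Icc 0 r) := by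
    apply strictMonoOn_of_deriv_pos (convex_Icc 0 r)
    · intro y hy
      exact (hcont y (by simp at hy; linarith [hy.1]) (by simp at hy; linarith [hy.2])).continuousWithinAt
    · intro y hy
      rw [interior_Icc] at hy
      obtain ⟨h0, hyr⟩ := hy
      have hyh : y < 1/2 := lt_trans hyr hrhalf
      rw [hderiv y (by linarith) hyh]
      have hA : (0:ℝ) < 1-2*y := by linarith
      have hB : (0:ℝ) < 1+2*y := by linarith
      have hy2 : y^2 < (J-2)/(4*J) := by nlinarith
      have key : 4*J*y^2 < J-2 := by
        rw [lt_div_iff₀ (by linarith)] at hy2; linarith [hy2]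
      have hsum : 2/(1-2*y) + 2/(1+2*y) = 4/((1-2*y)*(1+2*y)) := by
        field_simp; ring
      have hAB : (0:ℝ) < (1-2*y)*(1+2*y) := mul_pos hA hB
      have : 4/((1-2*y)*(1+2*y)) < 2*J := by
        rw [div_lt_iff₀ hAB]; nlinarith
      linarith [hsum, this]
  -- strict anti on [r, 1/2)
  have hanti : StrictAntiOn φ (Set.Ico r (1/2)) := by
    apply strictAntiOn_of_deriv_neg (convex_Ico r (1/2))
    · intro y hy
      exact (hcont y (by simp at hy; linarith [hy.1]) hy.2).continuousWithinAt
    · intro y hy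
      rw [interior_Ico] at hy
      obtain ⟨hry, hyh⟩ := hy
      have h0 : 0 < y := lt_trans hrpos hry
      rw [hderiv y (by linarith) hyh]
      have hA : (0:ℝ) < 1-2*y := by linarith
      have hB : (0:ℝ) < 1+2*y := by linarith
      have hy2 : (J-2)/(4*J) < y^2 := by nlinarith
      have key : J-2 < 4*J*y^2 := by
        rw [div_lt_iff₀ (by linarith)] at hy2; linarith [hy2]
      have hsum : 2/(1-2*y) + 2/(1+2*y) = 4/((1-2*y)*(1+2*y)) := by
        field_simp; ring
      have hAB : (0:ℝ) < (1-2*y)*(1+2*y) := mul_pos hA hB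
      have : 2*J < 4/((1-2*y)*(1+2*y)) := by
        rw [lt_div_iff₀ hAB]; nlinarith
      linarith [hsum, this]
  have hφ0 : φ 0 = 0 := by simp [hφ]
  have hodd : ∀ y : ℝ, φ (-y) = -φ y := by
    intro y
    simp only [hφ]
    rw [show (1:ℝ)-2*(-y) = 1+2*y from by ring, show (1:ℝ)+2*(-y) = 1-2*y from by ring]
    ring
  -- the point y1 near 1/2 where φ is negative
  set y1 : ℝ := (1 - Real.exp (-(2*J)))/2 with hy1
  have hexp1 : Real.exp (-(2*J)) < 1 := Real.exp_lt_one_iff.mpr (by linarith)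
  have hexp0 : 0 < Real.exp (-(2*J)) := Real.exp_pos _
  have hy1pos : 0 < y1 := by rw [hy1]; linarith
  have hy1half : y1 < 1/2 := by rw [hy1]; linarith
  have hφy1 : φ y1 < 0 := by
    have e1 : 1-2*y1 = Real.exp (-(2*J)) := by rw [hy1]; ring
    have e2 : 1+2*y1 = 2 - Real.exp (-(2*J)) := by rw [hy1]; ring
    have hlog2 : 0 < Real.log (2 - Real.exp (-(2*J))) := Real.log_pos (by linarith)
    have : φ y1 = 2*J*y1 + (-(2*J)) - Real.log (2 - Real.exp (-(2*J))) := by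
      simp only [hφ]; rw [e1, e2, Real.log_exp]
    rw [this]
    nlinarith
  have hry1 : r < y1 := by
    by_contra h
    push_neg at h
    have := hmono (Set.mem_Icc.mpr ⟨le_rfl, hrpos.le⟩) (Set.mem_Icc.mpr ⟨hy1pos.le, h⟩) hy1pos
    rw [hφ0] at this
    linarith
  have hφr : 0 < φ r := by
    have := hmono (Set.mem_Icc.mpr ⟨le_rfl, hrpos.le⟩) (Set.mem_Icc.mpr ⟨hrpos.le, le_rfl⟩) hrpos
    rw [hφ0] at this; exact this
  -- existence of the zero by IVT
  have hconts : ContinuousOn φ (Set.Icc r y1) := by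
    intro y hy
    exact (hcont y (by linarith [hy.1]) (by linarith [hy.2])).continuousWithinAt
  obtain ⟨ys, hysmem, hφys⟩ :=
    intermediate_value_Icc' hry1.le hconts (Set.mem_Icc.mpr ⟨hφy1.le, hφr.le⟩)
  have hyspos : 0 < ys := lt_of_lt_of_le hrpos hysmem.1
  have hyshalf : ys < 1/2 := lt_of_le_of_lt hysmem.2 hy1half
  have hysIco : ys ∈ Set.Ico r (1/2) := ⟨hysmem.1, hyshalf⟩
  -- uniqueness of the positive zero
  have huniq : ∀ y : ℝ, 0 < y → y < 1/2 → φ y = 0 → y = ys := by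
    intro y h0 hh hz
    rcases le_or_gt y r with hcase | hcase
    · exfalso
      have := hmono (Set.mem_Icc.mpr ⟨le_rfl, hrpos.le⟩) (Set.mem_Icc.mpr ⟨h0.le, hcase⟩) h0
      rw [hφ0, hz] at this; exact lt_irrefl 0 this
    · exact hanti.injOn ⟨hcase.le, hh⟩ hysIco (by rw [hz, hφys])
  refine ⟨ys, hyspos, hyshalf, ?_⟩
  intro y hylo hyhi
  show φ y = 0 ↔ (y = -ys ∨ y = 0 ∨ y = ys)
  constructor
  · intro hz
    rcases lt_trichotomy y 0 with h | h | h
    · left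
      have hneg : φ (-y) = 0 := by rw [hodd, hz]; ring
      have := huniq (-y) (by linarith) (by linarith) hneg
      linarith
    · right; left; exact h
    · right; right; exact huniq y h hyhi hz
  · rintro (rfl | rfl | rfl)
    · rw [hodd, hφys]; ring
    · exact hφ0
    · exact hφys

lemma cyc_mem (k : ℕ) (hk : 2 ≤ k) (J c : ℝ) :
    cycW k J (fun _ => 1) (fun _ => c) = 0 ↔
      (0 < c ∧ c < 1 ∧ Real.exp (2*J*(c-1/2)) * (1-c) = c) := by
  haveI : NeZero k := ⟨by omega⟩
  set u := Real.exp (J*(c-1/2)) with hu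
  have hupos : 0 < u := Real.exp_pos _
  have huinv : 0 < u⁻¹ := inv_pos.mpr hupos
  have hsq : Real.exp (2*J*(c-1/2)) = u*u := by
    rw [hu, ← Real.exp_add]; ring_nf
  constructor
  · intro h
    have h0 := congrFun h 0
    simp only [cycW, one_mul, Pi.zero_apply, Real.exp_neg, ← hu] at h0
    have hc0 : 0 < c := by nlinarith
    have hc1 : c < 1 := by nlinarith
    refine ⟨hc0, hc1, ?_⟩
    rw [hsq]
    have hinv : u * u⁻¹ = 1 := mul_inv_cancel₀ hupos.ne'
    nlinarith
  · rintro ⟨hc0, hc1, hE⟩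
    rw [hsq] at hE
    funext i
    simp only [cycW, one_mul, Pi.zero_apply, Real.exp_neg, ← hu]
    have hinv : u * u⁻¹ = 1 := mul_inv_cancel₀ hupos.ne'
    have : u * (u - c * (u + u⁻¹)) = 0 := by nlinarith
    nlinarith

lemma log_char (J c : ℝ) (h0 : 0 < c) (h1 : c < 1) :
    Real.exp (2*J*(c-1/2)) * (1-c) = c ↔
      2*J*(c-1/2) + Real.log (1-2*(c-1/2)) - Real.log (1+2*(c-1/2)) = 0 := by
  rw [show (1:ℝ)-2*(c-1/2) = 2*(1-c) from by ring,
      show (1:ℝ)+2*(c-1/2) = 2*c from by ring,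
      Real.log_mul two_ne_zero (by linarith), Real.log_mul two_ne_zero h0.ne']
  constructor
  · intro h
    have := congrArg Real.log h
    rw [Real.log_mul (Real.exp_ne_zero _) (by linarith), Real.log_exp] at this
    linarith
  · intro h
    have hA : 2*J*(c-1/2) = Real.log c - Real.log (1-c) := by linarith
    rw [hA, Real.exp_sub, Real.exp_log h0, Real.exp_log (by linarith)]
    rw [div_mul_eq_mul_div, mul_div_assoc, div_self (show (1:ℝ)-c ≠ 0 from by linarith), mul_one]

/-- For `k ≥ 2`, `J > 2` and all signs `+1`, the constant vectors `(c,…,c)`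
that are zeros of the cyclic-interaction field are exactly three, all with
`c ∈ (0,1)`: `c = 1/2` and `c = 1/2 ± y*` with `0 < y* < 1/2`. -/
theorem statement17 (k : ℕ) (hk : 2 ≤ k) (J : ℝ) (hJ : 2 < J) :
    ∃ ys : ℝ, 0 < ys ∧ ys < 1 / 2 ∧
      {c : ℝ | cycW k J (fun _ => 1) (fun _ => c) = 0} =
        {1 / 2 - ys, 1 / 2, 1 / 2 + ys} := by
  obtain ⟨ys, h1, h2, hiff⟩ := phi_zeros J hJ
  refine ⟨ys, h1, h2, ?_⟩
  ext c
  simp only [Set.mem_setOf_eq, Set.mem_insert_iff, Set.mem_singleton_iff]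
  rw [cyc_mem k hk J c]
  constructor
  · rintro ⟨hc0, hc1, hE⟩
    have hy := (hiff (c - 1/2) (by linarith) (by linarith)).mp
      ((log_char J c hc0 hc1).mp hE)
    rcases hy with h | h | h
    · left; linarith
    · right; left; linarith
    · right; right; linarith
  · rintro (rfl | rfl | rfl)
    · have hc0 : (0:ℝ) < 1/2 - ys := by linarith
      have hc1 : (1:ℝ)/2 - ys < 1 := by linarith
      refine ⟨hc0, hc1, (log_char J _ hc0 hc1).mpr ?_⟩
      exact (hiff (1/2 - ys - 1/2) (by linarith) (by linarith)).mpr (Or.inl (by ring))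
    · have hc0 : (0:ℝ) < 1/2 := by norm_num
      have hc1 : (1:ℝ)/2 < 1 := by norm_num
      refine ⟨hc0, hc1, (log_char J _ hc0 hc1).mpr ?_⟩
      exact (hiff ((1:ℝ)/2 - 1/2) (by linarith) (by linarith)).mpr (Or.inr (Or.inl (by ring)))
    · have hc0 : (0:ℝ) < 1/2 + ys := by linarith
      have hc1 : (1:ℝ)/2 + ys < 1 := by linarith
      refine ⟨hc0, hc1, (log_char J _ hc0 hc1).mpr ?_⟩
      exact (hiff (1/2 + ys - 1/2) (by linarith) (by linarith)).mpr (Or.inr (Or.inr (by ring)))
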